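/- arXiv:2303.17429 — 2 statements merged into one kernel-verified Lean document; each statement's English description precedes it below -/
import Mathlib

section
/- Let Γ be a countably infinite group with a finite symmetric generating set S and Cayley graph 𝒢. Suppose Γ acts properly on a space with walls: there are a set X with a Γ-action and a family 𝓗 of subsets of X with g·B ∈ 𝓗 for all g ∈ Γ and B ∈ 𝓗, such that for all x,y ∈ X the number w(x,y) := |{B ∈ 𝓗 : exactly one of x, y lies in B}| is finite, and for some x₀ ∈ X and every N ∈ ℕ the set {g ∈ Γ : w(x₀, g·x₀) ≤ N} is finite. Then for every α < 1 there exists a Γ-invariant bond percolation P on 𝒢 such that E[deg_ω(o)] > α·deg(o) and the two-point function τ(o,·) vanishes at infinity. -/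
open MeasureTheory Filter
open scoped ComplexOrder symmDiff

namespace InvPerc

variable {Γ : Type*} [Group Γ]

/-- Percolation configurations: indicator functions on unordered pairs of vertices. -/
abbrev Config (Γ : Type*) := Sym2 Γ → Bool

/-- The edge set of the (right) Cayley graph of `Γ` with respect to `S`. -/
def IsCayleyEdge (S : Finset Γ) (e : Sym2 Γ) : Prop :=
  ∃ g : Γ, ∃ t ∈ S, e = s(g, g * t)

/-- The action of `Γ` on configurations induced by left multiplication:
`e ∈ shift γ ω ↔ γ⁻¹ • e ∈ ω`. -/
def shift (γ : Γ) (ω : Config Γ) : Config Γ :=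
  fun e => ω (Sym2.map (fun x => γ⁻¹ * x) e)

/-- `ConnBy ω u v n` : `u` and `v` are joined by a path of at most `n` open edges of `ω`. -/
def ConnBy (ω : Config Γ) (u v : Γ) (n : ℕ) : Prop :=
  ∃ l : List Γ, l.length ≤ n ∧ List.Chain (fun a b => ω s(a, b) = true) u l ∧
    (u :: l).getLast (List.cons_ne_nil u l) = v

/-- `u` and `v` lie in the same cluster of the configuration `ω` (`u ↔ v` in `ω`). -/
def Conn (ω : Config Γ) (u v : Γ) : Prop := ∃ n : ℕ, ConnBy ω u v n

/-- The two-point function `τ(u,v) = P[u ↔ v]`. -/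
noncomputable def tpf (P : Measure (Config Γ)) (u v : Γ) : ℝ :=
  (P {ω | Conn ω u v}).toReal

/-- A `Γ`-invariant bond percolation on the Cayley graph of `(Γ, S)`: a probability
measure on configurations, supported on subsets of the Cayley edge set, invariant under
the action induced by left multiplication. -/
structure IsInvBondPerc (S : Finset Γ) (P : Measure (Config Γ)) : Prop where
  prob : IsProbabilityMeasure P
  supported : P {ω | ∀ e : Sym2 Γ, ω e = true → IsCayleyEdge S e} = 1
  invariant : ∀ γ : Γ, P.map (shift γ) = P

/-- The expected degree of the origin, `E[deg_ω(o)] = ∑_{t ∈ S} P[{o, t} ∈ ω]`. -/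
noncomputable def expDeg (S : Finset Γ) (P : Measure (Config Γ)) : ℝ :=
  ∑ t ∈ S, (P {ω : Config Γ | ω s(1, t) = true}).toReal

/-- The word length of `g` with respect to the generating set `S`. -/
noncomputable def wlen (S : Finset Γ) (g : Γ) : ℕ :=
  sInf {n : ℕ | ∃ l : List Γ, (∀ x ∈ l, x ∈ S) ∧ l.prod = g ∧ l.length = n}

/-- The word metric `d(g,h) = |g⁻¹h|`. -/
noncomputable def wdist (S : Finset Γ) (g h : Γ) : ℕ := wlen S (g⁻¹ * h)

/-- The two-point function of `P` vanishes at infinity: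
`sup {τ(g,h) : d(g,h) > r} → 0` as `r → ∞`. -/
def TpfVanishes (S : Finset Γ) (P : Measure (Config Γ)) : Prop :=
  ∀ ε : ℝ, 0 < ε → ∃ r : ℕ, ∀ g h : Γ, r < wdist S g h → tpf P g h < ε

/-- `S` is a finite symmetric generating set not containing the identity. -/
def IsSymmGen (S : Finset Γ) : Prop :=
  (1 : Γ) ∉ S ∧ (∀ t ∈ S, t⁻¹ ∈ S) ∧
    ∀ g : Γ, ∃ l : List Γ, (∀ x ∈ l, x ∈ S) ∧ l.prod = g

/-- A positive definite function on `Γ`. -/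
def IsPosDef (φ : Γ → ℂ) : Prop :=
  ∀ (n : ℕ) (g : Fin n → Γ) (a : Fin n → ℂ),
    0 ≤ ∑ i : Fin n, ∑ j : Fin n, (starRingEnd ℂ) (a i) * a j * φ ((g i)⁻¹ * g j)

/-- A conditionally negative definite function on `Γ`. -/
def IsCondNegDef (ψ : Γ → ℝ) : Prop :=
  ψ 1 = 0 ∧ (∀ g : Γ, ψ g⁻¹ = ψ g) ∧
    ∀ (n : ℕ) (g : Fin n → Γ) (a : Fin n → ℝ), (∑ i : Fin n, a i) = 0 →
      ∑ i : Fin n, ∑ j : Fin n, a i * a j * ψ ((g i)⁻¹ * g j) ≤ 0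

end InvPerc

namespace InvPerc
open MeasureTheory TopologicalSpace Set
open scoped ENNReal
set_option linter.unusedSectionVars false
section Bernoulli
variable {ι : Type*} {n : ℕ}
instance : TopologicalSpace (ZMod n) := ⊥
instance : DiscreteTopology (ZMod n) := ⟨rfl⟩
instance : IsTopologicalAddGroup (ZMod n) := {}
instance : MeasurableSpace (ι → ZMod n) := borel _
instance : BorelSpace (ι → ZMod n) := ⟨rfl⟩

variable (n) in
/-- point cylinder -/
def cylPt (F : Finset ι) (w : F → ZMod n) : Set (ι → ZMod n) := {η | ∀ i : F, η i = w i}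

lemma isOpen_cylPt (F : Finset ι) (w : F → ZMod n) : IsOpen (cylPt n F w) := by
  have : cylPt n F w = ⋂ i : F, (fun η : ι → ZMod n => η i) ⁻¹' {w i} := by
    ext η; simp [cylPt]
  rw [this]
  exact isOpen_iInter_of_finite fun i => (continuous_apply (i : ι)).isOpen_preimage _ trivial

variable (ι n) in
noncomputable def bmeas [NeZero n] : Measure (ι → ZMod n) :=
  Measure.addHaarMeasure (⊤ : PositiveCompacts (ι → ZMod n))

instance [NeZero n] : (bmeas ι n).IsAddLeftInvariant :=
  Measure.isAddLeftInvariant_addHaarMeasure _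

instance [NeZero n] : IsProbabilityMeasure (bmeas ι n) := by
  constructor
  have := Measure.addHaarMeasure_self (K₀ := (⊤ : PositiveCompacts (ι → ZMod n)))
  simpa [bmeas] using this

lemma cylPt_measure [NeZero n] (F : Finset ι) (w : F → ZMod n) :
    bmeas ι n (cylPt n F w) = ((n : ℝ≥0∞) ^ F.card)⁻¹ := by
  classical
  -- step 1: all translates equal
  have h1 : ∀ w : F → ZMod n, bmeas ι n (cylPt n F w) = bmeas ι n (cylPt n F 0) := by
    intro w
    set c : ι → ZMod n := fun i => if h : i ∈ F then - w ⟨i, h⟩ else 0 with hc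
    have := measure_preimage_add (bmeas ι n) c (cylPt n F 0)
    have hpre : (fun x => c + x) ⁻¹' (cylPt n F 0) = cylPt n F w := by
      ext η
      simp only [cylPt, mem_preimage, mem_setOf_eq, Pi.add_apply, Pi.zero_apply]
      refine forall_congr' fun i => ?_
      rw [hc]; simp only [i.2, dif_pos]
      rw [neg_add_eq_zero, eq_comm]
    rwa [hpre] at this
  -- step 2: partition
  have hdisj : Pairwise (Function.onFun Disjoint fun w : F → ZMod n => cylPt n F w) := by
    intro w w' hww
    rcases Function.ne_iff.1 hww with ⟨i, hi⟩
    refine Set.disjoint_left.2 fun η h h' => hi ?_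
    rw [← h i, ← h' i]
  have hcover : (⋃ w : F → ZMod n, cylPt n F w) = univ := by
    refine eq_univ_of_forall fun η => mem_iUnion.2 ⟨fun i : F => η i, fun i => rfl⟩
  have hsum := measure_iUnion (μ := bmeas ι n) hdisj
    (fun w => (isOpen_cylPt F w).measurableSet)
  rw [hcover, measure_univ, tsum_fintype] at hsum
  have hconst : ∀ w : F → ZMod n, bmeas ι n (cylPt n F w) = bmeas ι n (cylPt n F 0) := h1
  rw [Finset.sum_congr rfl (fun w _ => hconst w), Finset.sum_const, Finset.card_univ] at hsum
  have hcard : Fintype.card (F → ZMod n) = n ^ F.card := by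
    rw [Fintype.card_fun, ZMod.card, Fintype.card_coe]
  rw [hcard, nsmul_eq_mul, Nat.cast_pow] at hsum
  have ha0 : ((n : ℝ≥0∞) ^ F.card) ≠ 0 := by
    simp [pow_ne_zero, Nat.cast_ne_zero, NeZero.ne n]
  have hat : ((n : ℝ≥0∞) ^ F.card) ≠ ⊤ := ENNReal.pow_ne_top (ENNReal.natCast_ne_top n)
  calc bmeas ι n (cylPt n F w) = bmeas ι n (cylPt n F 0) := h1 w
    _ = ((n : ℝ≥0∞) ^ F.card)⁻¹ * ((n : ℝ≥0∞) ^ F.card * bmeas ι n (cylPt n F 0)) := by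
        rw [← mul_assoc, ENNReal.inv_mul_cancel ha0 hat, one_mul]
    _ = ((n : ℝ≥0∞) ^ F.card)⁻¹ := by rw [← hsum, mul_one]
end Bernoulli

lemma cyl_eq_biUnion (F : Finset ι) (A : Set (F → ZMod n)) :
    {η : ι → ZMod n | (fun i : F => η i) ∈ A} = ⋃ w ∈ A, cylPt n F w := by
  ext η
  simp only [mem_setOf_eq, mem_iUnion, exists_prop]
  constructor
  · intro h; exact ⟨_, h, fun i => rfl⟩
  · rintro ⟨w, hw, hww⟩
    have : (fun i : F => η i) = w := funext fun i => hww i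
    rwa [this]

lemma isOpen_cyl (F : Finset ι) (A : Set (F → ZMod n)) :
    IsOpen {η : ι → ZMod n | (fun i : F => η i) ∈ A} := by
  rw [cyl_eq_biUnion]
  exact isOpen_biUnion fun w _ => isOpen_cylPt F w

lemma cylPt_pairwise_disjoint (F : Finset ι) :
    Pairwise (Function.onFun Disjoint fun w : F → ZMod n => cylPt n F w) := by
  intro w w' hww
  rcases Function.ne_iff.1 hww with ⟨i, hi⟩
  exact Set.disjoint_left.2 fun η h h' => hi (by rw [← h i, ← h' i])

lemma bmeas_cyl [NeZero n] (F : Finset ι) (A : Set (F → ZMod n)) :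
    bmeas ι n {η : ι → ZMod n | (fun i : F => η i) ∈ A}
      = (Nat.card A : ℝ≥0∞) * ((n : ℝ≥0∞) ^ F.card)⁻¹ := by
  classical
  rw [cyl_eq_biUnion]
  have he : (⋃ w ∈ A, cylPt n F w) = ⋃ w ∈ A.toFinset, cylPt n F w := by simp
  rw [he, measure_biUnion_finset
      (fun w hw w' hw' hne => cylPt_pairwise_disjoint F hne)
      (fun w _ => (isOpen_cylPt F w).measurableSet)]
  rw [Finset.sum_congr rfl fun w _ => cylPt_measure F w, Finset.sum_const, nsmul_eq_mul]
  congr 2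
  rw [Set.toFinset_card, Nat.card_eq_fintype_card]

section Walls
variable {Γ : Type*} [Group Γ] {X : Type*}

def Wall (𝓗 : Set (Set X)) : Type _ := {B : Set X // B ∈ 𝓗}

variable (act : Γ →* Equiv.Perm X) {𝓗 : Set (Set X)}

/-- Separation predicate. -/
def Sep (x y : X) (B : Wall 𝓗) : Prop := Xor' (x ∈ B.1) (y ∈ B.1)

lemma sep_irrefl (x : X) (B : Wall 𝓗) : ¬ Sep x x B := by
  simp [Sep, Xor']

lemma sep_symm {x y : X} {B : Wall 𝓗} (h : Sep x y B) : Sep y x B := by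
  unfold Sep Xor' Xor at *; tauto

lemma sep_split {x y z : X} {B : Wall 𝓗} (h : Sep x z B) :
    Sep x y B ∨ Sep y z B := by
  unfold Sep Xor' Xor at *; tauto

variable (hinv : ∀ (γ : Γ), ∀ B ∈ 𝓗, (act γ) '' B ∈ 𝓗)

def wmap (γ : Γ) (B : Wall 𝓗) : Wall 𝓗 := ⟨(act γ) '' B.1, hinv γ B.1 B.2⟩

lemma wmap_wmap (γ δ : Γ) (B : Wall 𝓗) :
    wmap act hinv γ (wmap act hinv δ B) = wmap act hinv (γ * δ) B := by
  apply Subtype.ext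
  show (act γ) '' ((act δ) '' B.1) = (act (γ * δ)) '' B.1
  rw [← image_comp, map_mul]
  rfl

lemma wmap_one (B : Wall 𝓗) : wmap act hinv 1 B = B := by
  apply Subtype.ext
  show (act 1) '' B.1 = B.1
  rw [map_one]
  simp [Equiv.Perm.one_apply]

def wmapEquiv (γ : Γ) : Wall 𝓗 ≃ Wall 𝓗 where
  toFun := wmap act hinv γ
  invFun := wmap act hinv γ⁻¹
  left_inv B := by rw [wmap_wmap, inv_mul_cancel, wmap_one]
  right_inv B := by rw [wmap_wmap, mul_inv_cancel, wmap_one]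

lemma sep_equivariant (γ : Γ) (x y : X) (B : Wall 𝓗) :
    Sep (act γ x) (act γ y) (wmap act hinv γ B) ↔ Sep x y B := by
  unfold Sep wmap
  unfold Xor' Xor
  simp [(act γ).injective.mem_set_image]

/-- The set of walls cut by an edge. -/
def Cut (x₀ : X) (e : Sym2 Γ) (B : Wall 𝓗) : Prop :=
  ∃ a ∈ e, ∃ b ∈ e, Sep (act a x₀) (act b x₀) B

lemma cut_mk {x₀ : X} {a b : Γ} {B : Wall 𝓗} :
    Cut act x₀ s(a, b) B ↔ Sep (act a x₀) (act b x₀) B := by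
  constructor
  · rintro ⟨u, hu, v, hv, huv⟩
    rw [Sym2.mem_iff] at hu hv
    rcases hu with rfl | rfl <;> rcases hv with rfl | rfl
    · exact absurd huv (sep_irrefl _ _)
    · exact huv
    · exact sep_symm huv
    · exact absurd huv (sep_irrefl _ _)
  · intro h
    exact ⟨a, Sym2.mem_mk_left _ _, b, Sym2.mem_mk_right _ _, h⟩

lemma cut_shift (γ : Γ) (x₀ : X) (e : Sym2 Γ) (B : Wall 𝓗) :
    Cut act x₀ (Sym2.map (fun x => γ⁻¹ * x) e) B ↔ Cut act x₀ e (wmap act hinv γ B) := by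
  induction e using Sym2.inductionOn with
  | hf a b =>
    rw [Sym2.map_pair_eq, cut_mk, cut_mk]
    have h : ∀ c : Γ, act γ (act (γ⁻¹ * c) x₀) = act c x₀ := by
      intro c
      have : act γ * act (γ⁻¹ * c) = act c := by rw [← map_mul, mul_inv_cancel_left]
      rw [← this]; rfl
    rw [← sep_equivariant act hinv γ, h, h]

lemma cayley_shift {S : Finset Γ} (γ : Γ) (e : Sym2 Γ) :
    IsCayleyEdge S (Sym2.map (fun x => γ⁻¹ * x) e) ↔ IsCayleyEdge S e := by
  constructor
  · rintro ⟨g, t, ht, hgt⟩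
    induction e using Sym2.inductionOn with
    | hf a b =>
      rw [Sym2.map_pair_eq, Sym2.eq_iff] at hgt
      rcases hgt with ⟨h1, h2⟩ | ⟨h1, h2⟩
      · exact ⟨a, t, ht, by rw [Sym2.eq_iff]; left; constructor <;>
          [skip; rw [← mul_left_cancel_iff (a := γ⁻¹), ← mul_assoc, h1, h2]] <;> rfl⟩
      · exact ⟨b, t, ht, by rw [Sym2.eq_iff]; right; constructor <;>
          [rw [← mul_left_cancel_iff (a := γ⁻¹), ← mul_assoc, h2, h1]; skip] <;> rfl⟩
  · rintro ⟨g, t, ht, rfl⟩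
    exact ⟨γ⁻¹ * g, t, ht, by rw [Sym2.map_pair_eq, mul_assoc]⟩

open Classical in
/-- The percolation configuration determined by a wall configuration. -/
noncomputable def cfg (S : Finset Γ) (x₀ : X) (n : ℕ) (η : Wall 𝓗 → ZMod n) : Config Γ :=
  fun e => decide (IsCayleyEdge S e ∧ ∀ B : Wall 𝓗, Cut act x₀ e B → η B ≠ 0)

lemma cfg_true_iff {S : Finset Γ} {x₀ : X} {n : ℕ} {η : Wall 𝓗 → ZMod n} {e : Sym2 Γ} :
    cfg act S x₀ n η e = true ↔
      (IsCayleyEdge S e ∧ ∀ B : Wall 𝓗, Cut act x₀ e B → η B ≠ 0) := by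
  simp [cfg]

lemma cfg_shift (S : Finset Γ) (x₀ : X) (n : ℕ) (η : Wall 𝓗 → ZMod n) (γ : Γ) :
    shift γ (cfg act S x₀ n η) = cfg act S x₀ n (fun B => η (wmap act hinv γ⁻¹ B)) := by
  funext e
  show cfg act S x₀ n η (Sym2.map (fun x => γ⁻¹ * x) e) = _
  rcases Bool.eq_false_or_eq_true (cfg act S x₀ n η (Sym2.map (fun x => γ⁻¹ * x) e)) with h | h
  all_goals rw [h]
  · symm; rw [cfg_true_iff] at h ⊢
    refine ⟨(cayley_shift γ e).1 h.1, fun B hB => ?_⟩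
    apply h.2
    rw [cut_shift act hinv]
    rwa [wmap_wmap, mul_inv_cancel, wmap_one]
  · symm; rw [← Bool.not_eq_true] at h ⊢
    rw [cfg_true_iff] at h ⊢
    intro ⟨h1, h2⟩
    apply h
    refine ⟨(cayley_shift γ e).2 h1, fun B hB => ?_⟩
    rw [cut_shift act hinv] at hB
    have := h2 (wmap act hinv γ B) hB
    rwa [wmap_wmap, inv_mul_cancel, wmap_one] at this

lemma sepSet_eq_preimage (x y : X) :
    {B : Wall 𝓗 | Sep x y B} = Subtype.val ⁻¹' {B ∈ 𝓗 | Xor' (x ∈ B) (y ∈ B)} := by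
  ext B
  simp only [mem_setOf_eq, mem_preimage, Sep]
  exact ⟨fun h => ⟨B.2, h⟩, fun h => h.2⟩

lemma sepSet_finite (hfin : ∀ x y : X, {B ∈ 𝓗 | Xor' (x ∈ B) (y ∈ B)}.Finite) (x y : X) :
    {B : Wall 𝓗 | Sep x y B}.Finite := by
  rw [sepSet_eq_preimage]
  exact (hfin x y).preimage Subtype.val_injective.injOn

lemma sepSet_card (x y : X) :
    Nat.card {B : Wall 𝓗 | Sep x y B} = {B ∈ 𝓗 | Xor' (x ∈ B) (y ∈ B)}.ncard := by
  rw [← Nat.card_coe_set_eq, sepSet_eq_preimage]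
  have : {B ∈ 𝓗 | Xor' (x ∈ B) (y ∈ B)} =
      Subtype.val '' (Subtype.val ⁻¹' {B ∈ 𝓗 | Xor' (x ∈ B) (y ∈ B)} : Set (Wall 𝓗)) := by
    ext B
    constructor
    · intro h; exact ⟨⟨B, h.1⟩, h, rfl⟩
    · rintro ⟨C, hC, rfl⟩; exact hC
  conv_rhs => rw [this]
  exact (Nat.card_image_of_injective Subtype.val_injective _).symm

lemma sepSet_card_equivariant (hinv : ∀ (γ : Γ), ∀ B ∈ 𝓗, (act γ) '' B ∈ 𝓗) (γ : Γ) (x y : X) :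
    Nat.card {B : Wall 𝓗 | Sep (act γ x) (act γ y) B} = Nat.card {B : Wall 𝓗 | Sep x y B} := by
  apply Nat.card_congr
  refine ((wmapEquiv act hinv γ).subtypeEquiv fun B => ?_).symm
  show Sep x y B ↔ Sep (act γ x) (act γ y) (wmap act hinv γ B)
  exact (sep_equivariant act hinv γ x y B).symm

lemma cutSet_finite (hfin : ∀ x y : X, {B ∈ 𝓗 | Xor' (x ∈ B) (y ∈ B)}.Finite)
    (x₀ : X) (e : Sym2 Γ) : {B : Wall 𝓗 | Cut act x₀ e B}.Finite := by
  induction e using Sym2.inductionOn with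
  | hf a b =>
    have : {B : Wall 𝓗 | Cut act x₀ s(a, b) B} = {B | Sep (act a x₀) (act b x₀) B} := by
      ext B; exact cut_mk act
    rw [this]
    exact sepSet_finite hfin _ _

/-- Along an open chain, no selected wall separates the endpoints. -/
lemma chain_wall (S : Finset Γ) (x₀ : X) (n : ℕ) (η : Wall 𝓗 → ZMod n) :
    ∀ (l : List Γ) (u : Γ),
      List.Chain (fun a b => cfg act S x₀ n η s(a, b) = true) u l →
      ∀ B : Wall 𝓗, Sep (act u x₀) (act ((u :: l).getLast (List.cons_ne_nil u l)) x₀) B →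
      η B ≠ 0 := by
  intro l
  induction l with
  | nil =>
    intro u _ B hB
    exact absurd hB (by simpa using sep_irrefl (act u x₀) B)
  | cons b l ih =>
    intro u hc B hB
    rw [List.Chain, List.chain_cons] at hc
    have hlast : ((u :: b :: l).getLast (List.cons_ne_nil _ _))
        = ((b :: l).getLast (List.cons_ne_nil _ _)) := List.getLast_cons _
    rw [hlast] at hB
    rcases sep_split (y := act b x₀) hB with h | h
    · have := (cfg_true_iff act).1 hc.1
      exact this.2 B ((cut_mk act).2 h)
    · exact ih b hc.2 B h

end Walls

section Count
variable {n : ℕ} [NeZero n]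

lemma card_nonzero_pi (ι' : Type*) [Fintype ι'] :
    Nat.card {w : ι' → ZMod n | ∀ i, w i ≠ 0} = (n - 1) ^ Fintype.card ι' := by
  classical
  have e : {w : ι' → ZMod n | ∀ i, w i ≠ 0} ≃ ∀ _ : ι', {v : ZMod n // v ≠ 0} :=
    (Equiv.subtypeEquivRight fun w => Iff.rfl).trans
      (Equiv.subtypePiEquivPi (p := fun _ v => v ≠ 0))
  rw [Nat.card_congr e, Nat.card_pi]
  have : Nat.card {v : ZMod n // v ≠ 0} = n - 1 := by
    rw [Nat.card_eq_fintype_card]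
    have := Fintype.card_subtype_compl (fun v : ZMod n => v = 0)
    rw [Fintype.card_subtype_eq, ZMod.card] at this
    exact this
  simp [this]

end Count


section Events
open scoped ENNReal
variable {Γ : Type*} [Group Γ] {X : Type*} (act : Γ →* Equiv.Perm X) {𝓗 : Set (Set X)}

lemma nonzero_event_eq_cyl {ι : Type*} {n : ℕ} (W : Finset ι) :
    {η : ι → ZMod n | ∀ i ∈ W, η i ≠ 0}
      = {η : ι → ZMod n | (fun i : W => η i) ∈ {w : W → ZMod n | ∀ i, w i ≠ 0}} := by
  ext η
  simp only [mem_setOf_eq]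
  exact ⟨fun h i => h i i.2, fun h i hi => h ⟨i, hi⟩⟩

lemma bmeas_nonzero_event {ι : Type*} {n : ℕ} [NeZero n] (W : Finset ι) :
    bmeas ι n {η | ∀ i ∈ W, η i ≠ 0}
      = (((n - 1 : ℕ) : ℝ≥0∞) ^ W.card) * (((n : ℝ≥0∞) ^ W.card)⁻¹) := by
  rw [nonzero_event_eq_cyl, bmeas_cyl, card_nonzero_pi, Fintype.card_coe, Nat.cast_pow]

lemma measurableSet_nonzero_event {ι : Type*} {n : ℕ} [NeZero n] (W : Finset ι) :
    MeasurableSet {η : ι → ZMod n | ∀ i ∈ W, η i ≠ 0} := by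
  rw [nonzero_event_eq_cyl]
  exact (isOpen_cyl W _).measurableSet

variable (hfin : ∀ x y : X, {B ∈ 𝓗 | Xor' (x ∈ B) (y ∈ B)}.Finite)

/-- The finite set of walls cut by an edge. -/
noncomputable def cutFinset (x₀ : X) (e : Sym2 Γ) : Finset (Wall 𝓗) :=
  (cutSet_finite act hfin x₀ e).toFinset

lemma mem_cutFinset {x₀ : X} {e : Sym2 Γ} {B : Wall 𝓗} :
    B ∈ cutFinset act hfin x₀ e ↔ Cut act x₀ e B := Set.Finite.mem_toFinset _

lemma cfg_coord_event {S : Finset Γ} {x₀ : X} {n : ℕ} {e : Sym2 Γ} (hc : IsCayleyEdge S e) :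
    {η : Wall 𝓗 → ZMod n | cfg act S x₀ n η e = true}
      = {η | ∀ B ∈ cutFinset act hfin x₀ e, η B ≠ 0} := by
  ext η
  rw [mem_setOf_eq, cfg_true_iff]
  constructor
  · intro h B hB
    exact h.2 B ((mem_cutFinset act hfin).1 hB)
  · intro h
    exact ⟨hc, fun B hB => h B ((mem_cutFinset act hfin).2 hB)⟩

lemma cfg_coord_event' {S : Finset Γ} {x₀ : X} {n : ℕ} {e : Sym2 Γ} (hc : ¬ IsCayleyEdge S e) :
    {η : Wall 𝓗 → ZMod n | cfg act S x₀ n η e = true} = ∅ := by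
  ext η
  rw [mem_setOf_eq, cfg_true_iff]
  simp [hc]

include hfin in
lemma measurable_cfg {S : Finset Γ} {x₀ : X} {n : ℕ} [NeZero n] :
    Measurable (cfg act (𝓗 := 𝓗) S x₀ n) := by
  apply measurable_pi_lambda
  intro e
  have key : ∀ η : Wall 𝓗 → ZMod n, cfg act S x₀ n η e =
      if η ∈ {η : Wall 𝓗 → ZMod n | cfg act S x₀ n η e = true} then true else false := by
    intro η
    simp only [mem_setOf_eq]
    by_cases h : cfg act S x₀ n η e = true
    · rw [if_pos h]; exact h
    · rw [if_neg h]; exact (Bool.not_eq_true _) ▸ h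
  have hms : MeasurableSet {η : Wall 𝓗 → ZMod n | cfg act S x₀ n η e = true} := by
    by_cases hc : IsCayleyEdge S e
    · rw [cfg_coord_event act hfin hc]
      exact measurableSet_nonzero_event _
    · rw [cfg_coord_event' act hc]
      exact MeasurableSet.empty
  have : (fun η => cfg act S x₀ n η e) =
      fun η => if η ∈ {η : Wall 𝓗 → ZMod n | cfg act S x₀ n η e = true} then true else false :=
    funext key
  rw [this]
  exact Measurable.ite hms measurable_const measurable_const

end Events

section ConfigMeas
variable {Γ : Type*} [Group Γ]

example [Countable Γ] : Countable (Sym2 Γ) := inferInstance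
example [Countable Γ] : Countable (List Γ) := inferInstance

def Conn' (ω : Config Γ) (u v : Γ) : Prop :=
  ∃ l : List Γ, List.Chain (fun a b => ω s(a, b) = true) u l ∧
    (u :: l).getLast (List.cons_ne_nil u l) = v

lemma measurableSet_coord (e : Sym2 Γ) (b : Bool) :
    MeasurableSet {ω : Config Γ | ω e = b} := by
  have : {ω : Config Γ | ω e = b} = (fun ω : Config Γ => ω e) ⁻¹' {b} := rfl
  rw [this]
  exact (measurable_pi_apply e) (measurableSet_singleton b)

lemma measurableSet_chainSet (l : List Γ) : ∀ u : Γ,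
    MeasurableSet {ω : Config Γ | List.Chain (fun a b => ω s(a, b) = true) u l} := by
  induction l with
  | nil => intro u; simp [List.Chain]
  | cons b l ih =>
    intro u
    have : {ω : Config Γ | List.Chain (fun a b => ω s(a, b) = true) u (b :: l)}
        = {ω : Config Γ | ω s(u, b) = true}
          ∩ {ω : Config Γ | List.Chain (fun a b => ω s(a, b) = true) b l} := by
      ext ω; simp [List.Chain, List.chain_cons]
    rw [this]
    exact (measurableSet_coord _ _).inter (ih b)

lemma measurableSet_connSet [Countable Γ] (u v : Γ) :
    MeasurableSet {ω : Config Γ | Conn' ω u v} := by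
  have : {ω : Config Γ | Conn' ω u v} = ⋃ l : List Γ,
      {ω : Config Γ | List.Chain (fun a b => ω s(a, b) = true) u l}
        ∩ {_ω : Config Γ | (u :: l).getLast (List.cons_ne_nil u l) = v} := by
    ext ω
    simp only [Conn', mem_setOf_eq, mem_iUnion, mem_inter_iff]
  rw [this]
  exact MeasurableSet.iUnion fun l =>
    (measurableSet_chainSet l u).inter (MeasurableSet.const _)

lemma measurable_shift (γ : Γ) : Measurable (shift (Γ := Γ) γ) :=
  measurable_pi_lambda _ fun e => measurable_pi_apply _

end ConfigMeas

section Invariance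
open scoped ENNReal
variable {Γ : Type*} [Group Γ] {X : Type*} (act : Γ →* Equiv.Perm X) {𝓗 : Set (Set X)}
variable (hinv : ∀ (γ : Γ), ∀ B ∈ 𝓗, (act γ) '' B ∈ 𝓗)
variable (hfin : ∀ x y : X, {B ∈ 𝓗 | Xor' (x ∈ B) (y ∈ B)}.Finite)

lemma bool_eq_of_iff {a b : Bool} (h : a = true ↔ b = true) : a = b := by
  cases a <;> cases b <;> simp_all

include hinv hfin in
lemma map_cfg_invariant (S : Finset Γ) (x₀ : X) (n : ℕ) [NeZero n] (γ : Γ) :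
    ((bmeas (Wall 𝓗) n).map (cfg act S x₀ n)).map (shift γ)
      = (bmeas (Wall 𝓗) n).map (cfg act S x₀ n) := by
  classical
  set μ := bmeas (Wall 𝓗) n with hμ
  set F := cfg act (𝓗 := 𝓗) S x₀ n with hF
  have hFm : Measurable F := measurable_cfg act hfin
  have hsm : Measurable (shift (Γ := Γ) γ) := measurable_shift γ
  haveI : IsProbabilityMeasure (μ.map F) := Measure.isProbabilityMeasure_map hFm.aemeasurable
  haveI : IsProbabilityMeasure ((μ.map F).map (shift γ)) :=
    Measure.isProbabilityMeasure_map hsm.aemeasurable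
  refine ext_of_generate_finite (measurableCylinders (fun _ : Sym2 Γ => Bool))
    generateFrom_measurableCylinders.symm isPiSystem_measurableCylinders (fun s hs => ?_)
    (by rw [measure_univ, measure_univ])
  have hcylm : MeasurableSet s := MeasurableSet.of_mem_measurableCylinders hs
  obtain ⟨E₀, A₀, hA₀, rfl⟩ := (mem_measurableCylinders s).1 hs
  rw [Measure.map_apply hsm hcylm, Measure.map_apply hFm (hsm hcylm),
    Measure.map_apply hFm hcylm]
  set W : Finset (Wall 𝓗) := E₀.biUnion (fun e => cutFinset act hfin x₀ e) with hW
  set W' : Finset (Wall 𝓗) := W.image (wmap act hinv γ⁻¹) with hW'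
  set φ : ({B // B ∈ W} → ZMod n) → ({e // e ∈ E₀} → Bool) := fun w e =>
    decide (IsCayleyEdge S e.1 ∧ ∀ B : {B // B ∈ W}, Cut act x₀ e.1 B.1 → w B ≠ 0) with hφ
  have hcut_mem : ∀ (e : Sym2 Γ), e ∈ E₀ → ∀ B : Wall 𝓗, Cut act x₀ e B → B ∈ W :=
    fun e he B hB => Finset.mem_biUnion.2 ⟨e, he, (mem_cutFinset act hfin).2 hB⟩
  have key : ∀ (η : Wall 𝓗 → ZMod n),
      (fun e : {e // e ∈ E₀} => F η e) = φ (fun B : {B // B ∈ W} => η B) := by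
    intro η; funext e
    apply bool_eq_of_iff
    rw [hφ]
    show cfg act S x₀ n η e.1 = true ↔ _
    rw [cfg_true_iff, decide_eq_true_iff]
    constructor
    · rintro ⟨h1, h2⟩
      exact ⟨h1, fun B hB => h2 B.1 hB⟩
    · rintro ⟨h1, h2⟩
      exact ⟨h1, fun B hB => h2 ⟨B, hcut_mem e.1 e.2 B hB⟩ hB⟩
  have hpre : F ⁻¹' (cylinder E₀ A₀)
      = {η : Wall 𝓗 → ZMod n | (fun B : {B // B ∈ W} => η B) ∈ φ ⁻¹' A₀} := by
    ext η
    rw [mem_preimage, mem_cylinder, mem_setOf_eq, mem_preimage, ← key η]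
    exact Iff.rfl
  -- the wall translation
  have hTpre : F ⁻¹' (shift γ ⁻¹' cylinder E₀ A₀)
      = {η : Wall 𝓗 → ZMod n |
          (fun B : {B // B ∈ W} => η (wmap act hinv γ⁻¹ B)) ∈ φ ⁻¹' A₀} := by
    ext η
    rw [mem_preimage, mem_preimage]
    show shift γ (F η) ∈ cylinder E₀ A₀ ↔ _
    rw [hF, cfg_shift act hinv]
    have := hpre ▸ (mem_preimage (f := F) (s := cylinder E₀ A₀)
      (a := fun B => η (wmap act hinv γ⁻¹ B)))
    constructor
    · intro hmem
      have h2 : (fun B => η (wmap act hinv γ⁻¹ B)) ∈ F ⁻¹' (cylinder E₀ A₀) := by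
        rw [mem_preimage]; exact hmem
      rw [hpre] at h2
      exact h2
    · intro hmem
      have h2 : (fun B => η (wmap act hinv γ⁻¹ B)) ∈ F ⁻¹' (cylinder E₀ A₀) := by
        rw [hpre]; exact hmem
      rw [mem_preimage] at h2
      exact h2
  -- equivalence between W and W'
  have hinj : Function.Injective (wmap act hinv γ⁻¹) := (wmapEquiv act hinv γ⁻¹).injective
  set eW : {B // B ∈ W} ≃ {B // B ∈ W'} :=
    { toFun := fun B => ⟨wmap act hinv γ⁻¹ B.1, Finset.mem_image_of_mem _ B.2⟩
      invFun := fun B' => ⟨wmap act hinv γ B'.1, by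
        obtain ⟨C, hC, hCB⟩ := Finset.mem_image.1 B'.2
        rw [← hCB, wmap_wmap, mul_inv_cancel, wmap_one]
        exact hC⟩
      left_inv := fun B => Subtype.ext (by
        show wmap act hinv γ (wmap act hinv γ⁻¹ B.1) = B.1
        rw [wmap_wmap, mul_inv_cancel, wmap_one])
      right_inv := fun B' => Subtype.ext (by
        show wmap act hinv γ⁻¹ (wmap act hinv γ B'.1) = B'.1
        rw [wmap_wmap, inv_mul_cancel, wmap_one]) } with heW
  set Ψ : ({B // B ∈ W'} → ZMod n) ≃ ({B // B ∈ W} → ZMod n) :=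
    Equiv.arrowCongr eW.symm (Equiv.refl (ZMod n)) with hΨ
  have hψ : ∀ (η : Wall 𝓗 → ZMod n),
      (fun B : {B // B ∈ W} => η (wmap act hinv γ⁻¹ B))
        = Ψ (fun B' : {B // B ∈ W'} => η B') := fun η => rfl
  have hTpre2 : F ⁻¹' (shift γ ⁻¹' cylinder E₀ A₀)
      = {η : Wall 𝓗 → ZMod n |
          (fun B : {B // B ∈ W'} => η B) ∈ Ψ ⁻¹' (φ ⁻¹' A₀)} := by
    rw [hTpre]
    rfl
  rw [hpre, hTpre2, bmeas_cyl, bmeas_cyl]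
  have hcard1 : W'.card = W.card := Finset.card_image_of_injective W hinj
  have hcard2 : Nat.card (Ψ ⁻¹' (φ ⁻¹' A₀)) = Nat.card (φ ⁻¹' A₀) := by
    have him : Ψ ⁻¹' (φ ⁻¹' A₀) = Ψ.symm '' (φ ⁻¹' A₀) := by
      rw [Equiv.image_eq_preimage_symm]
      simp
    rw [him, Nat.card_image_of_injective Ψ.symm.injective]
  rw [hcard1, hcard2]

end Invariance

/-- If `Γ` acts properly on a space with walls (walls encoded by a
`Γ`-invariant family `𝓗` of subsets of `X`, with `w(x,y)` the number of members of `𝓗`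
separating `x` and `y`), then for every `α < 1` there is a `Γ`-invariant bond percolation on
its Cayley graph with `E[deg_ω(o)] > α·deg(o)` whose two-point function vanishes at
infinity. -/
theorem walls_action_implies_percolation {Γ : Type*} [Group Γ] [Countable Γ] [Infinite Γ]
    (S : Finset Γ) (hS : IsSymmGen S)
    (X : Type*) (act : Γ →* Equiv.Perm X) (𝓗 : Set (Set X))
    (hinv : ∀ (γ : Γ), ∀ B ∈ 𝓗, (act γ) '' B ∈ 𝓗)
    (hfin : ∀ x y : X, {B ∈ 𝓗 | Xor' (x ∈ B) (y ∈ B)}.Finite)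
    (x₀ : X)
    (hproper : ∀ N : ℕ,
      {γ : Γ | ({B ∈ 𝓗 | Xor' (x₀ ∈ B) (act γ x₀ ∈ B)}).ncard ≤ N}.Finite) :
    ∀ α : ℝ, α < 1 → ∃ P : Measure (Config Γ),
      IsInvBondPerc S P ∧ expDeg S P > α * (S.card : ℝ) ∧ TpfVanishes S P := by
  classical
  intro α hα
  have hSne : S.Nonempty := by
    rw [Finset.nonempty_iff_ne_empty]
    intro hemp
    have hall : ∀ g : Γ, g = 1 := by
      intro g
      obtain ⟨l, hl, hp⟩ := hS.2.2 g
      cases l with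
      | nil => exact hp ▸ rfl
      | cons a l => exact absurd (hl a List.mem_cons_self) (by simp [hemp])
    obtain ⟨a, b, hab⟩ := exists_pair_ne Γ
    exact hab ((hall a).trans (hall b).symm)
  set β : ℝ := max α 0 with hβ
  have hβ0 : 0 ≤ β := le_max_right _ _
  have hαβ : α ≤ β := le_max_left _ _
  have hβ1 : β < 1 := max_lt hα one_pos
  set M : ℕ := S.sup (fun t => Nat.card {B : Wall 𝓗 | Sep ((act 1) x₀) ((act t) x₀) B}) with hM
  obtain ⟨n₀, hn₀⟩ := exists_nat_gt ((M : ℝ) / (1 - β))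
  set n : ℕ := max n₀ 2 with hn
  haveI : NeZero n := ⟨by omega⟩
  have hn2 : 2 ≤ n := le_max_right _ _
  have hnpos : (0 : ℝ) < n := by
    have : (0 : ℕ) < n := by omega
    exact_mod_cast this
  have hMn : (M : ℝ) / n < 1 - β := by
    rw [div_lt_iff₀ hnpos]
    have h1 : (M : ℝ) < n₀ * (1 - β) := by
      rw [div_lt_iff₀ (by linarith)] at hn₀
      exact hn₀
    have h2 : (n₀ : ℝ) ≤ n := by
      have : n₀ ≤ n := le_max_left _ _
      exact_mod_cast this
    nlinarith
  set μ := bmeas (Wall 𝓗) n with hμ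
  set F := cfg act (𝓗 := 𝓗) S x₀ n with hF
  have hFm : Measurable F := measurable_cfg act hfin
  haveI : IsProbabilityMeasure (μ.map F) := Measure.isProbabilityMeasure_map hFm.aemeasurable
  have hn1 : (2 : ℝ) ≤ n := by exact_mod_cast hn2
  have hq0 : (0 : ℝ) ≤ ((n : ℝ) - 1) / n := div_nonneg (by linarith) hnpos.le
  have hq1 : ((n : ℝ) - 1) / n < 1 := by rw [div_lt_one hnpos]; linarith
  -- value of the "no selected wall in W" event
  have hval : ∀ (W : Finset (Wall 𝓗)),
      (μ {η | ∀ B ∈ W, η B ≠ 0}).toReal = (((n : ℝ) - 1) / n) ^ W.card := by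
    intro W
    rw [hμ, bmeas_nonzero_event, ENNReal.toReal_mul, ENNReal.toReal_pow, ENNReal.toReal_inv,
      ENNReal.toReal_pow, ENNReal.toReal_natCast, ENNReal.toReal_natCast]
    have h1 : ((n - 1 : ℕ) : ℝ) = (n : ℝ) - 1 := by
      have : 1 ≤ n := by omega
      push_cast [this]
      ring
    rw [h1, div_pow, div_eq_mul_inv]
  -- supported on Cayley edges
  have hsupp : μ.map F {ω : Config Γ | ∀ e : Sym2 Γ, ω e = true → IsCayleyEdge S e} = 1 := by
    have hAm : MeasurableSet {ω : Config Γ | ∀ e : Sym2 Γ, ω e = true → IsCayleyEdge S e} := by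
      have he : {ω : Config Γ | ∀ e : Sym2 Γ, ω e = true → IsCayleyEdge S e}
          = ⋂ e : Sym2 Γ, {ω : Config Γ | ω e = true → IsCayleyEdge S e} := by
        ext ω; simp only [mem_setOf_eq, mem_iInter]
      rw [he]
      refine MeasurableSet.iInter fun e => ?_
      by_cases hc : IsCayleyEdge S e
      · have : {ω : Config Γ | ω e = true → IsCayleyEdge S e} = univ := by
          ext ω; simp [hc]
        rw [this]; exact MeasurableSet.univ
      · have : {ω : Config Γ | ω e = true → IsCayleyEdge S e} = {ω : Config Γ | ω e = false} := by
          ext ω; simp [hc]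
        rw [this]; exact measurableSet_coord e false
    rw [Measure.map_apply hFm hAm]
    have hpre : F ⁻¹' {ω : Config Γ | ∀ e, ω e = true → IsCayleyEdge S e} = univ := by
      ext η
      simp only [mem_preimage, mem_setOf_eq, mem_univ, iff_true]
      intro e he
      exact ((cfg_true_iff act).1 he).1
    rw [hpre]
    exact measure_univ
  -- expected degree
  have hedge : ∀ t ∈ S, IsCayleyEdge S s((1 : Γ), t) := fun t ht => ⟨1, t, ht, by rw [one_mul]⟩
  have hcoord : ∀ t ∈ S, μ.map F {ω : Config Γ | ω s((1 : Γ), t) = true}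
      = μ {η | ∀ B ∈ cutFinset act hfin x₀ s((1 : Γ), t), η B ≠ 0} := by
    intro t ht
    rw [Measure.map_apply hFm (measurableSet_coord _ true)]
    congr 1
    have h0 : F ⁻¹' {ω : Config Γ | ω s((1 : Γ), t) = true}
        = {η : Wall 𝓗 → ZMod n | cfg act S x₀ n η s((1 : Γ), t) = true} := rfl
    rw [h0, cfg_coord_event act hfin (hedge t ht)]
  have hcutpair : ∀ a b : Γ, (cutFinset act hfin x₀ s(a, b)).card
      = Nat.card {B : Wall 𝓗 | Sep ((act a) x₀) ((act b) x₀) B} := by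
    intro a b
    have h : {B : Wall 𝓗 | Cut act x₀ s(a, b) B} = {B | Sep ((act a) x₀) ((act b) x₀) B} := by
      ext B; exact cut_mk act
    rw [cutFinset, ← Set.ncard_eq_toFinset_card _ (cutSet_finite act hfin x₀ _), h,
      Nat.card_coe_set_eq]
  have hcard_le : ∀ t ∈ S, (cutFinset act hfin x₀ s((1 : Γ), t)).card ≤ M := by
    intro t ht
    rw [hcutpair 1 t]
    exact Finset.le_sup (f := fun t => Nat.card {B : Wall 𝓗 | Sep ((act 1) x₀) ((act t) x₀) B}) ht
  have hreal : ∀ m : ℕ, m ≤ M → β < (((n : ℝ) - 1) / n) ^ m := by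
    intro m hm
    have hkey : 1 - (m : ℝ) / n ≤ (((n : ℝ) - 1) / n) ^ m := by
      have h1 : ((n : ℝ) - 1) / n = 1 + -(1 / n) := by
        rw [sub_div, div_self (ne_of_gt hnpos)]
        ring
      have hd1 : 1 / (n : ℝ) ≤ 1 := by rw [div_le_one hnpos]; linarith
      have h2 := one_add_mul_le_pow (a := -(1 / (n : ℝ))) (by linarith) m
      have h3 : 1 - (m : ℝ) / n = 1 + m * -(1 / n) := by ring
      rw [h1]
      linarith [h2]
    have hmM : (m : ℝ) ≤ M := Nat.cast_le.2 hm
    have h2 : (m : ℝ) / n ≤ (M : ℝ) / n := by gcongr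
    linarith
  have hdeg : expDeg S (μ.map F) > α * (S.card : ℝ) := by
    have hterm : ∀ t ∈ S, α < (μ.map F {ω : Config Γ | ω s((1 : Γ), t) = true}).toReal := by
      intro t ht
      refine lt_of_le_of_lt hαβ ?_
      rw [hcoord t ht, hval]
      exact hreal _ (hcard_le t ht)
    calc α * (S.card : ℝ) = ∑ _t ∈ S, α := by rw [Finset.sum_const, nsmul_eq_mul, mul_comm]
      _ < ∑ t ∈ S, (μ.map F {ω : Config Γ | ω s((1 : Γ), t) = true}).toReal :=
          Finset.sum_lt_sum_of_nonempty hSne hterm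
  -- vanishing of the two-point function
  have hvan : TpfVanishes S (μ.map F) := by
    intro ε hε
    obtain ⟨N, hN⟩ := exists_pow_lt_of_lt_one hε hq1
    refine ⟨(hproper N).toFinset.sup (wlen S), fun g h hr => ?_⟩
    set k := g⁻¹ * h with hk
    have hkn : ¬ ({B ∈ 𝓗 | Xor' (x₀ ∈ B) ((act k) x₀ ∈ B)}.ncard ≤ N) := by
      intro hle
      have hmem : k ∈ (hproper N).toFinset := (Set.Finite.mem_toFinset _).2 hle
      have h1 : wlen S k ≤ (hproper N).toFinset.sup (wlen S) := Finset.le_sup hmem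
      have h2 : wdist S g h = wlen S k := rfl
      omega
    have hNlt : N < Nat.card {B : Wall 𝓗 | Sep x₀ ((act k) x₀) B} := by
      rw [sepSet_card]
      omega
    set Wgh := (sepSet_finite (𝓗 := 𝓗) hfin ((act g) x₀) ((act h) x₀)).toFinset
      with hWgh
    have hgk : (act g) ((act k) x₀) = (act h) x₀ := by
      have h1 : act g * act k = act h := by rw [hk, ← map_mul, mul_inv_cancel_left]
      rw [← h1]; rfl
    have hcardW : Wgh.card = Nat.card {B : Wall 𝓗 | Sep x₀ ((act k) x₀) B} := by
      calc Wgh.card = Nat.card {B : Wall 𝓗 | Sep ((act g) x₀) ((act h) x₀) B} := by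
            rw [Nat.card_coe_set_eq,
              Set.ncard_eq_toFinset_card _ (sepSet_finite (𝓗 := 𝓗) hfin ((act g) x₀) ((act h) x₀))]
        _ = Nat.card {B : Wall 𝓗 | Sep x₀ ((act k) x₀) B} := by
            rw [← hgk]
            exact sepSet_card_equivariant act hinv g x₀ ((act k) x₀)
    have hsub : F ⁻¹' {ω : Config Γ | Conn' ω g h} ⊆ {η | ∀ B ∈ Wgh, η B ≠ 0} := by
      rintro η ⟨l, hchain, hlast⟩ B hB
      have hsep : Sep ((act g) x₀) ((act ((g :: l).getLast (List.cons_ne_nil g l))) x₀) B := by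
        rw [hlast]
        exact (Set.Finite.mem_toFinset
          (sepSet_finite (𝓗 := 𝓗) hfin ((act g) x₀) ((act h) x₀))).1 hB
      exact chain_wall act S x₀ n η l g hchain B hsep
    have hconn : {ω : Config Γ | Conn ω g h} = {ω : Config Γ | Conn' ω g h} := by
      ext ω
      constructor
      · rintro ⟨m, l, _, hchain, hlast⟩; exact ⟨l, hchain, hlast⟩
      · rintro ⟨l, hchain, hlast⟩; exact ⟨l.length, l, le_refl _, hchain, hlast⟩
    have hbound : tpf (μ.map F) g h ≤ (((n : ℝ) - 1) / n) ^ Wgh.card := by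
      rw [tpf, hconn, Measure.map_apply hFm (measurableSet_connSet g h)]
      calc (μ (F ⁻¹' {ω : Config Γ | Conn' ω g h})).toReal
          ≤ (μ {η | ∀ B ∈ Wgh, η B ≠ 0}).toReal :=
            ENNReal.toReal_mono (measure_ne_top μ _) (measure_mono hsub)
        _ = (((n : ℝ) - 1) / n) ^ Wgh.card := hval Wgh
    refine lt_of_le_of_lt (hbound.trans (pow_le_pow_of_le_one hq0 hq1.le ?_)) hN
    omega
  exact ⟨μ.map F, ⟨inferInstance, hsupp, fun γ => map_cfg_invariant act hinv hfin S x₀ n γ⟩,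
    hdeg, hvan⟩


end InvPerc
end

section
/- Let Γ be a countably infinite groupic with a finite symmetric generating set S and Cayley graph 𝒢, and let P be any bond percolation on 𝒢 (not necessarily Γ-invariant). Then the kernel k : Γ × Γ → [0,1], k(g,h) := P[g is not connected to h in ω] = 1 − τ(g,h), is a measure definite kernel: there exist a measure space (Ω, ℬ, μ) and a map g ↦ S_g from Γ to ℬ such that k(g,h) = μ(S_g Δ S_h) for all g,h ∈ Γ. -/
open MeasureTheory Filter
open scoped ComplexOrder symmDiff

namespace InvPerc

section Aux
variable {Γ : Type} [Group Γ]

lemma conn_refl (ω : Config Γ) (u : Γ) : Conn ω u u :=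
  ⟨0, [], le_refl _, List.Chain.nil, rfl⟩

lemma chain_snoc {ω : Config Γ} {u c : Γ} {l : List Γ}
    (h : List.Chain (fun a b => ω s(a, b) = true) u l)
    (hc : ω s((u :: l).getLast (List.cons_ne_nil u l), c) = true) :
    List.Chain (fun a b => ω s(a, b) = true) u (l ++ [c]) := by
  induction l generalizing u with
  | nil => simpa [List.Chain] using hc
  | cons b t ih =>
    rw [List.Chain, List.chain_cons] at h
    refine List.chain_cons.2 ⟨h.1, ih h.2 ?_⟩
    simpa [List.getLast_cons] using hc

lemma conn_iff_rtg (ω : Config Γ) (u v : Γ) :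
    Conn ω u v ↔ Relation.ReflTransGen (fun a b => ω s(a, b) = true) u v := by
  constructor
  · rintro ⟨n, l, -, hc, hl⟩
    clear n
    induction l generalizing u with
    | nil => simp at hl; subst hl; exact Relation.ReflTransGen.refl
    | cons b t ih =>
      rw [List.Chain, List.chain_cons] at hc
      refine Relation.ReflTransGen.head hc.1 (ih b hc.2 ?_)
      simpa [List.getLast_cons] using hl
  · intro h
    induction h with
    | refl => exact conn_refl ω u
    | tail hab hbc ih =>
      obtain ⟨n, l, hlen, hc, hl⟩ := ih
      refine ⟨n + 1, l ++ [_], by simp only [List.length_append, List.length_cons, List.length_nil]; omega,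
        chain_snoc hc (by rw [hl]; exact hbc), ?_⟩
      exact List.getLast_concat (l := u :: l)

lemma conn_symm {ω : Config Γ} {u v : Γ} (h : Conn ω u v) : Conn ω v u := by
  rw [conn_iff_rtg] at h ⊢
  exact @Std.Symm.symm _ _ (@Relation.ReflTransGen.stdSymm _ _ ⟨fun a b hab => by rwa [Sym2.eq_swap]⟩) _ _ h

lemma conn_trans {ω : Config Γ} {u v w : Γ} (h1 : Conn ω u v) (h2 : Conn ω v w) :
    Conn ω u w := by
  rw [conn_iff_rtg] at h1 h2 ⊢
  exact h1.trans h2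

/-- Measurability of the chain event. -/
lemma meas_chain (u : Γ) (l : List Γ) :
    MeasurableSet {ω : Config Γ | List.Chain (fun a b => ω s(a, b) = true) u l} := by
  induction l generalizing u with
  | nil => simpa [List.Chain] using MeasurableSet.univ
  | cons b t ih =>
    have : {ω : Config Γ | List.Chain (fun a b => ω s(a, b) = true) u (b :: t)}
        = ((fun ω : Config Γ => ω s(u, b)) ⁻¹' {true}) ∩
          {ω : Config Γ | List.Chain (fun a b => ω s(a, b) = true) b t} := by
      ext ω; simp [List.Chain, List.chain_cons]
    rw [this]
    have hm : Measurable fun ω : Config Γ => ω s(u, b) := measurable_pi_apply _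
    exact (hm (measurableSet_singleton true)).inter (ih b)

lemma meas_conn [Countable Γ] (u v : Γ) : MeasurableSet {ω : Config Γ | Conn ω u v} := by
  have : {ω : Config Γ | Conn ω u v} = ⋃ l : List Γ,
      {ω : Config Γ | List.Chain (fun a b => ω s(a, b) = true) u l ∧
        (u :: l).getLast (List.cons_ne_nil u l) = v} := by
    ext ω
    simp only [Set.mem_iUnion, Set.mem_setOf_eq]
    constructor
    · rintro ⟨n, l, -, hc, hl⟩; exact ⟨l, hc, hl⟩
    · rintro ⟨l, hc, hl⟩; exact ⟨l.length, l, le_refl _, hc, hl⟩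
  rw [this]
  refine MeasurableSet.iUnion fun l => ?_
  by_cases h : (u :: l).getLast (List.cons_ne_nil u l) = v
  · have : {ω : Config Γ | List.Chain (fun a b => ω s(a, b) = true) u l ∧
        (u :: l).getLast (List.cons_ne_nil u l) = v}
        = {ω : Config Γ | List.Chain (fun a b => ω s(a, b) = true) u l} := by
      ext ω; simp [h]
    rw [this]; exact meas_chain u l
  · have : {ω : Config Γ | List.Chain (fun a b => ω s(a, b) = true) u l ∧
        (u :: l).getLast (List.cons_ne_nil u l) = v} = ∅ := by
      ext ω; simp [h]
    rw [this]; exact MeasurableSet.empty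

/-- The index of the cluster of `g` in `ω`: the least value of `ι` on the cluster. -/
noncomputable def rep (ι : Γ → ℕ) (ω : Config Γ) (g : Γ) : ℕ :=
  sInf {n : ℕ | ∃ v : Γ, ι v = n ∧ Conn ω g v}

lemma rep_set_nonempty (ι : Γ → ℕ) (ω : Config Γ) (g : Γ) :
    {n : ℕ | ∃ v : Γ, ι v = n ∧ Conn ω g v}.Nonempty :=
  ⟨ι g, g, rfl, conn_refl ω g⟩

lemma rep_eq_iff {ι : Γ → ℕ} (hι : Function.Injective ι) (ω : Config Γ) (g h : Γ) :
    rep ι ω g = rep ι ω h ↔ Conn ω g h := by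
  constructor
  · intro heq
    have h1 : ∃ v : Γ, ι v = rep ι ω g ∧ Conn ω g v := Nat.sInf_mem (rep_set_nonempty ι ω g)
    have h2 : ∃ v : Γ, ι v = rep ι ω h ∧ Conn ω h v := Nat.sInf_mem (rep_set_nonempty ι ω h)
    rw [← heq] at h2
    obtain ⟨v1, hv1, hc1⟩ := h1
    obtain ⟨v2, hv2, hc2⟩ := h2
    have : v1 = v2 := hι (by rw [hv1, hv2])
    subst this
    exact conn_trans hc1 (conn_symm hc2)
  · intro hc
    have : {n : ℕ | ∃ v : Γ, ι v = n ∧ Conn ω g v}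
        = {n : ℕ | ∃ v : Γ, ι v = n ∧ Conn ω h v} := by
      ext n
      constructor
      · rintro ⟨v, hv, hcv⟩; exact ⟨v, hv, conn_trans (conn_symm hc) hcv⟩
      · rintro ⟨v, hv, hcv⟩; exact ⟨v, hv, conn_trans hc hcv⟩
    unfold rep; rw [this]

lemma meas_repSet [Countable Γ] (ι : Γ → ℕ) (g : Γ) (n : ℕ) :
    MeasurableSet {ω : Config Γ | ∃ v : Γ, ι v = n ∧ Conn ω g v} := by
  have : {ω : Config Γ | ∃ v : Γ, ι v = n ∧ Conn ω g v}
      = ⋃ v : Γ, {ω : Config Γ | ι v = n ∧ Conn ω g v} := by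
    ext ω; simp
  rw [this]
  refine MeasurableSet.iUnion fun v => ?_
  by_cases h : ι v = n
  · have : {ω : Config Γ | ι v = n ∧ Conn ω g v} = {ω : Config Γ | Conn ω g v} := by
      ext ω; simp [h]
    rw [this]; exact meas_conn g v
  · have : {ω : Config Γ | ι v = n ∧ Conn ω g v} = ∅ := by ext ω; simp [h]
    rw [this]; exact MeasurableSet.empty

lemma rep_eq_n_iff (ι : Γ → ℕ) (ω : Config Γ) (g : Γ) (n : ℕ) :
    rep ι ω g = n ↔ (∃ v : Γ, ι v = n ∧ Conn ω g v) ∧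
      ∀ k < n, ¬∃ v : Γ, ι v = k ∧ Conn ω g v := by
  constructor
  · rintro rfl
    exact ⟨Nat.sInf_mem (rep_set_nonempty ι ω g), fun k hk => Nat.notMem_of_lt_sInf hk⟩
  · rintro ⟨h1, h2⟩
    refine le_antisymm (Nat.sInf_le h1) ?_
    by_contra hlt
    push_neg at hlt
    exact h2 _ hlt (Nat.sInf_mem (rep_set_nonempty ι ω g))

lemma meas_rep_eq [Countable Γ] (ι : Γ → ℕ) (g : Γ) (n : ℕ) :
    MeasurableSet {ω : Config Γ | rep ι ω g = n} := by
  have : {ω : Config Γ | rep ι ω g = n} =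
      {ω : Config Γ | ∃ v : Γ, ι v = n ∧ Conn ω g v} ∩
      ⋂ k ∈ Set.Iio n, {ω : Config Γ | ∃ v : Γ, ι v = k ∧ Conn ω g v}ᶜ := by
    ext ω
    simp only [Set.mem_setOf_eq, Set.mem_inter_iff, Set.mem_iInter, Set.mem_compl_iff,
      Set.mem_Iio, rep_eq_n_iff]
    try tauto
  rw [this]
  exact (meas_repSet ι g n).inter
    (MeasurableSet.biInter (Set.to_countable _) fun k _ => (meas_repSet ι g k).compl)


end Aux

instance : SigmaFinite (Measure.count : Measure ℕ) := by
  refine ⟨⟨⟨fun n => Set.Iic n, fun _ => trivial, fun n => ?_, ?_⟩⟩⟩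
  · rw [Measure.count_apply_finite _ (Set.finite_Iic n)]
    exact ENNReal.natCast_lt_top _
  · ext k; simp only [Set.mem_iUnion, Set.mem_Iic, Set.mem_univ, iff_true]
    exact ⟨k, le_refl k⟩

/-- for any bond percolation `P` on the Cayley graph of `(Γ, S)` (not
necessarily invariant), the kernel `k(g,h) = P[g ↮ h] = 1 - τ(g,h)` is measure definite. -/
theorem nonconnection_kernel_measure_definite {Γ : Type} [Group Γ] [Countable Γ] [Infinite Γ]
    (S : Finset Γ) (hS : IsSymmGen S)
    (P : Measure (Config Γ)) (hprob : IsProbabilityMeasure P)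
    (hsupp : P {ω : Config Γ | ∀ e : Sym2 Γ, ω e = true → IsCayleyEdge S e} = 1) :
    ∃ (Ω : Type) (mΩ : MeasurableSpace Ω) (μ : Measure Ω) (Smap : Γ → Set Ω),
      (∀ g : Γ, MeasurableSet (Smap g)) ∧
      (∀ g h : Γ, μ (Smap g ∆ Smap h) = P {ω : Config Γ | ¬ Conn ω g h}) := by
  classical
  obtain ⟨ι, hι⟩ := Countable.exists_injective_nat Γ
  let ν : Measure ℕ := (2 : NNReal)⁻¹ • Measure.count
  let Smap : Γ → Set (Config Γ × ℕ) := fun g =>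
    ⋃ n : ℕ, {ω : Config Γ | rep ι ω g = n} ×ˢ ({n} : Set ℕ)
  have hmem : ∀ (g : Γ) (p : Config Γ × ℕ), p ∈ Smap g ↔ rep ι p.1 g = p.2 := by
    intro g p
    simp only [Smap, Set.mem_iUnion, Set.mem_prod, Set.mem_setOf_eq, Set.mem_singleton_iff]
    constructor
    · rintro ⟨n, h1, rfl⟩; exact h1
    · intro h; exact ⟨p.2, h, rfl⟩
  have hSmeas : ∀ g : Γ, MeasurableSet (Smap g) := fun g =>
    MeasurableSet.iUnion fun n => (meas_rep_eq ι g n).prod (measurableSet_singleton n)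
  refine ⟨Config Γ × ℕ, inferInstance, P.prod ν, Smap, hSmeas, ?_⟩
  intro g h
  have hD : MeasurableSet (Smap g ∆ Smap h) := (hSmeas g).symmDiff (hSmeas h)
  rw [Measure.prod_apply hD]
  have hsec : ∀ ω : Config Γ,
      ν (Prod.mk ω ⁻¹' (Smap g ∆ Smap h)) = Set.indicator {ω : Config Γ | ¬ Conn ω g h} 1 ω := by
    intro ω
    have hpre : Prod.mk ω ⁻¹' (Smap g ∆ Smap h) = ({rep ι ω g} : Set ℕ) ∆ {rep ι ω h} := by
      ext k
      simp only [Set.mem_preimage, Set.mem_symmDiff, hmem, Set.mem_singleton_iff]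
      constructor
      · rintro (⟨h1, h2⟩ | ⟨h1, h2⟩)
        · exact Or.inl ⟨h1.symm, fun e => h2 e.symm⟩
        · exact Or.inr ⟨h1.symm, fun e => h2 e.symm⟩
      · rintro (⟨h1, h2⟩ | ⟨h1, h2⟩)
        · exact Or.inl ⟨h1.symm, fun e => h2 e.symm⟩
        · exact Or.inr ⟨h1.symm, fun e => h2 e.symm⟩
    rw [hpre]
    by_cases hc : Conn ω g h
    · rw [(rep_eq_iff hι ω g h).2 hc, symmDiff_self,
        Set.indicator_of_notMem (by simpa using hc)]
      simp [Set.bot_eq_empty]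
    · have hne : rep ι ω g ≠ rep ι ω h := fun e => hc ((rep_eq_iff hι ω g h).1 e)
      rw [Set.indicator_of_mem (by simpa using hc)]
      have hset : ({rep ι ω g} : Set ℕ) ∆ {rep ι ω h} = {rep ι ω g, rep ι ω h} := by
        ext k
        simp only [Set.mem_symmDiff, Set.mem_singleton_iff, Set.mem_insert_iff]
        constructor
        · rintro (⟨rfl, -⟩ | ⟨rfl, -⟩) <;> simp
        · rintro (rfl | rfl)
          · exact Or.inl ⟨rfl, hne⟩
          · exact Or.inr ⟨rfl, fun e => hne e.symm⟩
      rw [hset]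
      have hsplit : ({rep ι ω g, rep ι ω h} : Set ℕ) = {rep ι ω g} ∪ {rep ι ω h} := rfl
      show ν _ = _
      rw [hsplit, Measure.smul_apply,
        measure_union (by simpa using hne) (measurableSet_singleton _),
        Measure.count_singleton, Measure.count_singleton]
      simp only [ENNReal.smul_def, smul_eq_mul, Pi.one_apply]
      rw [one_add_one_eq_two, ENNReal.coe_inv (by norm_num), ENNReal.coe_ofNat,
        ENNReal.inv_mul_cancel (by norm_num) (by norm_num)]
  rw [lintegral_congr hsec]
  exact lintegral_indicator_one ((meas_conn g h).compl)

end InvPerc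
end
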